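/- With $Q_n$ as in the recurrence $Q_{-1}=0$, $Q_0=1$, $Q_{n+1}(x)=(x-d_n)Q_n(x)-\lambda_n^2 Q_{n-1}(x)$, $d_0=1+\alpha$, $d_n=2+\alpha/(n+1)$, $\lambda_n^2=1+\alpha/n$, the coefficient of $x^3$ in $Q_n$ satisfies $a_{3,n} = \frac{-(n-2)(n-1)n(n+1)\,[5(\alpha+2)(\alpha+4)n(n+1) + 8(7\alpha+20)n + 12(\alpha+20)]}{240(\alpha+1)(\alpha+2)(\alpha+3)(\alpha+4)(\alpha+5)}\; a_{0,n}$ for all $n \ge 0$, where $a_{0,n} = (-1)^n \prod_{k=1}^n(1+\alpha/k)$. -/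

import Mathlib

open Polynomial Finset

/-- Auxiliary predicate: closed forms for the four lowest coefficients of `Q n`. -/
def stmt8Aux (α : ℝ) (Q : ℕ → Polynomial ℝ) (n : ℕ) : Prop :=
  (Q n).coeff 0 = ((-1) ^ n * ∏ k ∈ Finset.Icc 1 n, (1 + α / k)) ∧
  (Q n).coeff 1 = (-(n * (n + 1)) / (2 * (α + 1))) *
      ((-1) ^ n * ∏ k ∈ Finset.Icc 1 n, (1 + α / k)) ∧
  (Q n).coeff 2 = ((n * (n - 1) * (n + 1) * (3 * (α + 2) * n + 2 * (α + 6))) /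
        (24 * (α + 1) * (α + 2) * (α + 3))) *
      ((-1) ^ n * ∏ k ∈ Finset.Icc 1 n, (1 + α / k)) ∧
  (Q n).coeff 3 =
    (-((n - 2) * (n - 1) * n * (n + 1) *
        (5 * (α + 2) * (α + 4) * n * (n + 1) + 8 * (7 * α + 20) * n
          + 12 * (α + 20))) /
      (240 * (α + 1) * (α + 2) * (α + 3) * (α + 4) * (α + 5))) *
      ((-1) ^ n * ∏ k ∈ Finset.Icc 1 n, (1 + α / k))

set_option maxHeartbeats 2000000 in
/-- With `Qₙ` defined by the three-term recurrence, the coefficient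
of `x³` in `Qₙ` satisfies
`a_{3,n} = -((n-2)(n-1)n(n+1)[5(α+2)(α+4)n(n+1) + 8(7α+20)n + 12(α+20)])
           / (240(α+1)(α+2)(α+3)(α+4)(α+5)) ⋅ a_{0,n}`,
where `a_{0,n} = (-1)ⁿ ∏_{k=1}^n (1 + α/k)`. -/
theorem stmt8 (α : ℝ) (hα : -1 < α) (Q : ℕ → Polynomial ℝ)
    (hQ0 : Q 0 = 1) (hQ1 : Q 1 = X - C (1 + α))
    (hrec : ∀ n : ℕ, 1 ≤ n →
      Q (n + 1) = (X - C (2 + α / (n + 1))) * Q n - C (1 + α / n) * Q (n - 1)) :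
    ∀ n : ℕ, (Q n).coeff 3 =
      (-((n - 2) * (n - 1) * n * (n + 1) *
          (5 * (α + 2) * (α + 4) * n * (n + 1) + 8 * (7 * α + 20) * n
            + 12 * (α + 20))) /
        (240 * (α + 1) * (α + 2) * (α + 3) * (α + 4) * (α + 5))) *
        ((-1) ^ n * ∏ k ∈ Finset.Icc 1 n, (1 + α / k)) := by
  have h1 : (α + 1) ≠ 0 := by linarith
  have h2 : (α + 2) ≠ 0 := by linarith
  have h3 : (α + 3) ≠ 0 := by linarith
  have h4 : (α + 4) ≠ 0 := by linarith
  have h5 : (α + 5) ≠ 0 := by linarith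
  have hAsucc : ∀ n : ℕ,
      ((-1 : ℝ) ^ (n + 1) * ∏ k ∈ Finset.Icc 1 (n + 1), (1 + α / k)) =
        -(1 + α / (n + 1)) * ((-1) ^ n * ∏ k ∈ Finset.Icc 1 n, (1 + α / k)) := by
    intro n
    rw [Finset.prod_Icc_succ_top (by omega : 1 ≤ n + 1)]
    push_cast
    ring
  have hk0 : ∀ (p q : ℝ[X]) (d l : ℝ),
      ((X - C d) * p - C l * q).coeff 0 = -(d * p.coeff 0) - l * q.coeff 0 := by
    intro p q d l
    simp [sub_mul, mul_coeff_zero]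
  have hk : ∀ (p q : ℝ[X]) (d l : ℝ) (k : ℕ),
      ((X - C d) * p - C l * q).coeff (k + 1) =
        p.coeff k - d * p.coeff (k + 1) - l * q.coeff (k + 1) := by
    intro p q d l k
    simp [sub_mul, coeff_X_mul]
  have hk1 : ∀ (p q : ℝ[X]) (d l : ℝ),
      ((X - C d) * p - C l * q).coeff 1 =
        p.coeff 0 - d * p.coeff 1 - l * q.coeff 1 := fun p q d l => hk p q d l 0
  have hk2 : ∀ (p q : ℝ[X]) (d l : ℝ),
      ((X - C d) * p - C l * q).coeff 2 =
        p.coeff 1 - d * p.coeff 2 - l * q.coeff 2 := fun p q d l => hk p q d l 1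
  have hk3 : ∀ (p q : ℝ[X]) (d l : ℝ),
      ((X - C d) * p - C l * q).coeff 3 =
        p.coeff 2 - d * p.coeff 3 - l * q.coeff 3 := fun p q d l => hk p q d l 2
  have key : ∀ n : ℕ, stmt8Aux α Q n ∧ stmt8Aux α Q (n + 1) := by
    intro n
    induction n with
    | zero =>
      constructor
      · refine ⟨?_, ?_, ?_, ?_⟩ <;> simp [stmt8Aux, hQ0, coeff_one]
      · refine ⟨?_, ?_, ?_, ?_⟩ <;>
          · simp [stmt8Aux, hQ1, coeff_one, coeff_X, coeff_C]
            try field_simp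
            try ring
    | succ n ih =>
      obtain ⟨he, hf⟩ := ih
      refine ⟨hf, ?_⟩
      obtain ⟨e0, e1, e2, e3⟩ := he
      obtain ⟨f0, f1, f2, f3⟩ := hf
      have hr := hrec (n + 1) (by omega)
      simp only [Nat.add_sub_cancel] at hr
      have hn1 : ((n : ℝ) + 1) ≠ 0 := by positivity
      have hn2 : ((n : ℝ) + 2) ≠ 0 := by positivity
      refine ⟨?_, ?_, ?_, ?_⟩
      · rw [hr, hk0, f0, e0, hAsucc (n + 1), hAsucc n]
        push_cast
        field_simp
        ring
      · rw [hr, hk1, f0, f1, e1, hAsucc (n + 1), hAsucc n]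
        push_cast
        field_simp
        ring
      · rw [hr, hk2, f1, f2, e2, hAsucc (n + 1), hAsucc n]
        push_cast
        field_simp
        ring
      · rw [hr, hk3, f2, f3, e3, hAsucc (n + 1), hAsucc n]
        push_cast
        field_simp
        ring
  intro n
  exact ((key n).1).2.2.2
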